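/- Let A and Ã be p × p real symmetric matrices. Let λ₁ ≥ ⋯ ≥ λ_{p−1} > λ_p be the eigenvalues of A, and let v, ṽ be unit eigenvectors of A and Ã respectively corresponding to their smallest eigenvalues. Then 1 − (vᵀṽ)² ≤ 4‖A − Ã‖₂ / (λ_{p−1} − λ_p). -/

import Mathlib

noncomputable def opNorm {m n : ℕ} (A : Matrix (Fin m) (Fin n) ℝ) : ℝ :=
  ‖LinearMap.toContinuousLinearMap (Matrix.toEuclideanLin (𝕜 := ℝ) A)‖

open scoped RealInnerProductSpace Matrix

section Helpers
variable {p : ℕ}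

lemma evb_apply (B : Matrix (Fin p) (Fin p) ℝ) (hB : B.IsHermitian) (j : Fin p) :
    Matrix.toEuclideanLin B (hB.eigenvectorBasis j)
      = hB.eigenvalues j • hB.eigenvectorBasis j := by
  have h := hB.mulVec_eigenvectorBasis j
  have : Matrix.toEuclideanLin B (hB.eigenvectorBasis j)
      = (WithLp.equiv 2 (Fin p → ℝ)).symm (B *ᵥ ⇑(hB.eigenvectorBasis j)) := rfl
  rw [this, h]
  rfl

lemma quad_expand (B : Matrix (Fin p) (Fin p) ℝ) (hB : B.IsHermitian)
    (x : EuclideanSpace ℝ (Fin p)) :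
    ⟪x, Matrix.toEuclideanLin B x⟫
      = ∑ i, hB.eigenvalues i * ⟪hB.eigenvectorBasis i, x⟫ ^ 2 := by
  rw [← (hB.eigenvectorBasis).sum_inner_mul_inner x (Matrix.toEuclideanLin B x)]
  apply Finset.sum_congr rfl
  intro i _
  have hsym := (Matrix.isHermitian_iff_isSymmetric.mp hB) (hB.eigenvectorBasis i) x
  rw [← hsym, evb_apply, inner_smul_left]
  rw [real_inner_comm x]
  ring_nf
  simp [starRingEnd_apply]

lemma parseval (b : OrthonormalBasis (Fin p) ℝ (EuclideanSpace ℝ (Fin p)))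
    (x y : EuclideanSpace ℝ (Fin p)) :
    ∑ i, ⟪b i, x⟫ * ⟪b i, y⟫ = ⟪x, y⟫ := by
  rw [← b.sum_inner_mul_inner x y]
  apply Finset.sum_congr rfl
  intro i _
  rw [real_inner_comm x]

end Helpers

set_option maxHeartbeats 1000000

/-- Remark 6.2: eigenvector perturbation bound for the smallest eigenvalue. -/
theorem eigenvector_perturbation {p : ℕ} (hp : 2 ≤ p)
    (A At : Matrix (Fin p) (Fin p) ℝ)
    (hA : A.IsHermitian) (hAt : At.IsHermitian)
    (lam : Fin p → ℝ) (hmono : Antitone lam)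
    (σ : Fin p ≃ Fin p) (hlam : lam = hA.eigenvalues ∘ σ)
    (hgap : lam ⟨p - 1, by omega⟩ < lam ⟨p - 2, by omega⟩)
    (v vt : Fin p → ℝ)
    (hv : ∑ i, v i ^ 2 = 1) (hvt : ∑ i, vt i ^ 2 = 1)
    (hev : A.mulVec v = lam ⟨p - 1, by omega⟩ • v)
    (μt : ℝ)
    (hμt : IsLeast {x | ∃ i, hAt.eigenvalues i = x} μt)
    (hevt : At.mulVec vt = μt • vt) :
    1 - (∑ i, v i * vt i) ^ 2
      ≤ 4 * opNorm (A - At) / (lam ⟨p - 2, by omega⟩ - lam ⟨p - 1, by omega⟩) := by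
  classical
  have hp1 : p - 1 < p := by omega
  have hp2 : p - 2 < p := by omega
  set lP : ℝ := lam ⟨p - 1, hp1⟩ with hlP
  set lQ : ℝ := lam ⟨p - 2, hp2⟩ with hlQ
  set ε : ℝ := opNorm (A - At) with hε
  have hεnn : 0 ≤ ε := norm_nonneg _
  have hδ : 0 < lQ - lP := by
    have : lP < lQ := hgap
    linarith
  set ev : EuclideanSpace ℝ (Fin p) := (WithLp.equiv 2 (Fin p → ℝ)).symm v with hev'
  set wt : EuclideanSpace ℝ (Fin p) := (WithLp.equiv 2 (Fin p → ℝ)).symm vt with hwt'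
  have hivv : ⟪ev, ev⟫ = 1 := by
    rw [← hv, PiLp.inner_apply]
    simp [PiLp.inner_apply, RCLike.inner_apply, sq, hev']
  have hiww : ⟪wt, wt⟫ = 1 := by
    rw [← hvt, PiLp.inner_apply]
    simp [PiLp.inner_apply, RCLike.inner_apply, sq, hwt']
  have hc : ⟪ev, wt⟫ = ∑ i, v i * vt i := by
    simp [PiLp.inner_apply, RCLike.inner_apply, hev', hwt']
    exact Finset.sum_congr rfl fun i _ => mul_comm _ _
  set c : ℝ := ⟪ev, wt⟫ with hcdef
  -- eigen equations in EuclideanSpace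
  have hAev : Matrix.toEuclideanLin A ev = lP • ev := by
    have h1 : Matrix.toEuclideanLin A ev = (WithLp.equiv 2 (Fin p → ℝ)).symm (A *ᵥ v) := rfl
    rw [h1, hev]
    rfl
  have hAtwt : Matrix.toEuclideanLin At wt = μt • wt := by
    have h1 : Matrix.toEuclideanLin At wt = (WithLp.equiv 2 (Fin p → ℝ)).symm (At *ᵥ vt) := rfl
    rw [h1, hevt]
    rfl
  -- operator norm bound
  have habs : ∀ x : EuclideanSpace ℝ (Fin p), ⟪x, x⟫ = 1 →
      |⟪x, Matrix.toEuclideanLin (A - At) x⟫| ≤ ε := by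
    intro x hx
    have hn : ‖x‖ = 1 := by
      have h := real_inner_self_eq_norm_mul_norm x
      nlinarith [norm_nonneg x]
    have h1 : |⟪x, Matrix.toEuclideanLin (A - At) x⟫|
        ≤ ‖x‖ * ‖Matrix.toEuclideanLin (A - At) x‖ := abs_real_inner_le_norm _ _
    have h2 : ‖Matrix.toEuclideanLin (A - At) x‖ ≤ ε * ‖x‖ :=
      (LinearMap.toContinuousLinearMap (Matrix.toEuclideanLin (𝕜 := ℝ) (A - At))).le_opNorm x
    rw [hn] at h1 h2
    simpa using h1.trans (by simpa using h2)
  have hsplit : ∀ x : EuclideanSpace ℝ (Fin p),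
      Matrix.toEuclideanLin (A - At) x
        = Matrix.toEuclideanLin A x - Matrix.toEuclideanLin At x := by
    intro x
    simp [map_sub, LinearMap.sub_apply]
  -- Step 1 : μt ≤ lP + ε
  have hstep1 : μt ≤ lP + ε := by
    have hsum : ∑ i, ⟪hAt.eigenvectorBasis i, ev⟫ ^ 2 = 1 := by
      have h := parseval hAt.eigenvectorBasis ev ev
      rw [hivv] at h
      rw [← h]
      exact Finset.sum_congr rfl fun i _ => (sq _)
    have h1 : μt ≤ ⟪ev, Matrix.toEuclideanLin At ev⟫ := by
      rw [quad_expand At hAt]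
      calc μt = ∑ i, μt * ⟪hAt.eigenvectorBasis i, ev⟫ ^ 2 := by
            rw [← Finset.mul_sum, hsum, mul_one]
        _ ≤ ∑ i, hAt.eigenvalues i * ⟪hAt.eigenvectorBasis i, ev⟫ ^ 2 := by
            apply Finset.sum_le_sum
            intro i _
            exact mul_le_mul_of_nonneg_right (hμt.2 ⟨i, rfl⟩) (sq_nonneg _)
    have h2 : ⟪ev, Matrix.toEuclideanLin At ev⟫
        = lP - ⟪ev, Matrix.toEuclideanLin (A - At) ev⟫ := by
      rw [hsplit, inner_sub_right, hAev, real_inner_smul_right, hivv]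
      ring
    have h3 := habs ev hivv
    rw [h2] at h1
    have := abs_le.mp h3
    linarith [this.1, this.2]
  -- Step 2 : ⟪wt, A wt⟫ ≤ μt + ε
  have hstep2 : ⟪wt, Matrix.toEuclideanLin A wt⟫ ≤ μt + ε := by
    have h2 : ⟪wt, Matrix.toEuclideanLin A wt⟫
        = μt + ⟪wt, Matrix.toEuclideanLin (A - At) wt⟫ := by
      have := hsplit wt
      have h3 : Matrix.toEuclideanLin A wt
          = Matrix.toEuclideanLin At wt + Matrix.toEuclideanLin (A - At) wt := by
        rw [this]; abel
      rw [h3, inner_add_right, hAtwt, real_inner_smul_right, hiww]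
      ring
    have h3 := abs_le.mp (habs wt hiww)
    linarith [h3.2, h2.le, h2.ge]
  -- Step 3 : lower bound on ⟪wt, A wt⟫
  set i₀ : Fin p := σ ⟨p - 1, hp1⟩ with hi₀
  set u := hA.eigenvectorBasis with hu
  have heig0 : hA.eigenvalues i₀ = lP := by
    have := congrFun hlam ⟨p - 1, hp1⟩
    simp only [Function.comp_apply] at this
    rw [hlP, this, hi₀]
  have heig_ge : ∀ i, i ≠ i₀ → lQ ≤ hA.eigenvalues i := by
    intro i hi
    have h1 : hA.eigenvalues i = lam (σ.symm i) := by
      have := congrFun hlam (σ.symm i)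
      simp only [Function.comp_apply, Equiv.apply_symm_apply] at this
      rw [this]
    have h2 : σ.symm i ≠ ⟨p - 1, hp1⟩ := by
      intro h
      apply hi
      rw [hi₀, ← h, Equiv.apply_symm_apply]
    have h3 : (σ.symm i : Fin p) ≤ ⟨p - 2, hp2⟩ := by
      have h5 : (σ.symm i).val ≠ p - 1 := by
        intro h
        exact h2 (Fin.ext h)
      rw [Fin.le_def]
      show (σ.symm i).val ≤ p - 2
      have h4 := (σ.symm i).isLt
      omega
    rw [h1, hlQ]
    exact hmono h3
  have hlam_lt : ∀ i, i ≠ i₀ → lP < hA.eigenvalues i := fun i hi =>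
    lt_of_lt_of_le (by linarith) (heig_ge i hi)
  have horth : ∀ i, i ≠ i₀ → ⟪u i, ev⟫ = 0 := by
    intro i hi
    have hsym := (Matrix.isHermitian_iff_isSymmetric.mp hA) (u i) ev
    rw [evb_apply A hA i, hAev, real_inner_smul_left, real_inner_smul_right] at hsym
    have hne : hA.eigenvalues i - lP ≠ 0 := by
      have := hlam_lt i hi
      intro h; linarith
    have : (hA.eigenvalues i - lP) * ⟪u i, ev⟫ = 0 := by ring_nf; ring_nf at hsym; linarith
    exact (mul_eq_zero.mp this).resolve_left hne
  have hc0sq : ⟪u i₀, ev⟫ ^ 2 = 1 := by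
    have h := parseval u ev ev
    rw [hivv] at h
    rw [← h, Finset.sum_eq_single i₀]
    · exact sq _
    · intro i _ hi
      rw [horth i hi, zero_mul]
    · intro h; exact absurd (Finset.mem_univ i₀) h
  have hcd : c = ⟪u i₀, ev⟫ * ⟪u i₀, wt⟫ := by
    rw [hcdef, ← parseval u ev wt, Finset.sum_eq_single i₀]
    · intro i _ hi
      rw [horth i hi, zero_mul]
    · intro h; exact absurd (Finset.mem_univ i₀) h
  have hc2 : c ^ 2 = ⟪u i₀, wt⟫ ^ 2 := by
    rw [hcd, mul_pow, hc0sq, one_mul]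
  have hdsum : ∑ i, ⟪u i, wt⟫ ^ 2 = 1 := by
    have h := parseval u wt wt
    rw [hiww] at h
    rw [← h]
    exact Finset.sum_congr rfl fun i _ => (sq _)
  have hstep3 : lP + (lQ - lP) * (1 - c ^ 2) ≤ ⟪wt, Matrix.toEuclideanLin A wt⟫ := by
    rw [quad_expand A hA]
    have hsplit2 : ∑ i, hA.eigenvalues i * ⟪u i, wt⟫ ^ 2
        = hA.eigenvalues i₀ * ⟪u i₀, wt⟫ ^ 2
          + ∑ i ∈ Finset.univ.erase i₀, hA.eigenvalues i * ⟪u i, wt⟫ ^ 2 :=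
      (Finset.add_sum_erase _ _ (Finset.mem_univ i₀)).symm
    have hsplit3 : ∑ i ∈ Finset.univ.erase i₀, ⟪u i, wt⟫ ^ 2 = 1 - ⟪u i₀, wt⟫ ^ 2 := by
      have := (Finset.add_sum_erase Finset.univ (fun i => ⟪u i, wt⟫ ^ 2)
        (Finset.mem_univ i₀)).symm
      rw [hdsum] at this
      linarith
    have hlow : lQ * (1 - ⟪u i₀, wt⟫ ^ 2)
        ≤ ∑ i ∈ Finset.univ.erase i₀, hA.eigenvalues i * ⟪u i, wt⟫ ^ 2 := by
      rw [← hsplit3, Finset.mul_sum]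
      apply Finset.sum_le_sum
      intro i hi
      exact mul_le_mul_of_nonneg_right (heig_ge i (Finset.ne_of_mem_erase hi)) (sq_nonneg _)
    have hd2 : ⟪u i₀, wt⟫ ^ 2 ≤ 1 := by
      have hnn : (0:ℝ) ≤ ∑ i ∈ Finset.univ.erase i₀, ⟪u i, wt⟫ ^ 2 :=
        Finset.sum_nonneg fun i _ => sq_nonneg _
      linarith [hsplit3]
    rw [hsplit2, heig0]
    nlinarith [hc2]
  -- combine
  have hkey : (lQ - lP) * (1 - c ^ 2) ≤ 2 * ε := by linarith
  rw [← hc, le_div_iff₀ hδ]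
  nlinarith [hkey, hεnn]
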